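/- Let n ≥ 1, ζ = exp(2πi/n), and let A and B be n×n unitary matrices satisfying A·B = ζ^j·B·A where gcd(j, n) = 1. If a ∈ ℂ^n is a unit eigenvector of A and b ∈ ℂ^n is a unit eigenvector of B, then |⟨a, b⟩|² = 1/n, where ⟨·,·⟩ is the standard Hermitian inner product on ℂ^n. -/

import Mathlib

open Matrix

noncomputable def zeta (n : ℕ) : ℂ := Complex.exp (2 * Real.pi * Complex.I / n)

theorem stmt12 {n : ℕ} (hn : 1 ≤ n) (j : ℕ) (hj : Nat.gcd j n = 1)
    (A B : Matrix (Fin n) (Fin n) ℂ) (hA : A * Aᴴ = 1) (hB : B * Bᴴ = 1)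
    (hcomm : A * B = zeta n ^ j • (B * A))
    (a b : Fin n → ℂ) (ca cb : ℂ)
    (ha : A.mulVec a = ca • a) (hb : B.mulVec b = cb • b)
    (hna : (∑ x, (starRingEnd ℂ) (a x) * a x) = 1)
    (hnb : (∑ x, (starRingEnd ℂ) (b x) * b x) = 1) :
    ‖∑ x, (starRingEnd ℂ) (a x) * b x‖ ^ 2 = 1 / n := by
  have hn0 : n ≠ 0 := by omega
  -- ζ^j is a primitive n-th root of unity
  have hprim : IsPrimitiveRoot (zeta n ^ j) n :=
    (Complex.isPrimitiveRoot_exp n hn0).pow_of_coprime j hj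
  set ξ : ℂ := zeta n ^ j with hξ
  -- |ξ| = 1 (as conj ξ * ξ = 1)
  have hξ1 : (starRingEnd ℂ) ξ * ξ = 1 := by
    have : ‖ξ‖ = 1 := hprim.norm'_eq_one hn0
    calc (starRingEnd ℂ) ξ * ξ = (Complex.normSq ξ : ℂ) := by
          rw [mul_comm]; exact Complex.mul_conj ξ
      _ = 1 := by rw [← Complex.sq_norm, this]; norm_num
  -- unitary invariance of the dot product
  have hA' : Aᴴ * A = 1 := mul_eq_one_comm.mp hA
  have hB' : Bᴴ * B = 1 := mul_eq_one_comm.mp hB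
  have key : ∀ (U : Matrix (Fin n) (Fin n) ℂ), Uᴴ * U = 1 →
      ∀ x y : Fin n → ℂ, star (U.mulVec x) ⬝ᵥ U.mulVec y = star x ⬝ᵥ y := by
    intro U hU x y
    rw [Matrix.star_mulVec, ← Matrix.dotProduct_mulVec, Matrix.mulVec_mulVec, hU,
      Matrix.one_mulVec]
  have hna' : star a ⬝ᵥ a = 1 := by
    simpa [dotProduct, Pi.star_apply] using hna
  have hnb' : star b ⬝ᵥ b = 1 := by
    simpa [dotProduct, Pi.star_apply] using hnb
  -- |ca| = |cb| = 1
  have hca : (starRingEnd ℂ) ca * ca = 1 := by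
    have := key A hA' a a
    rw [ha] at this
    rw [hna'] at this
    simpa [star_smul, smul_dotProduct, dotProduct_smul, hna', mul_assoc,
      mul_comm] using this
  have hcb : (starRingEnd ℂ) cb * cb = 1 := by
    have := key B hB' b b
    rw [hb] at this
    rw [hnb'] at this
    simpa [star_smul, smul_dotProduct, dotProduct_smul, hnb', mul_assoc,
      mul_comm] using this
  have hcb0 : cb ≠ 0 := by
    intro h; rw [h] at hcb; simp at hcb
  -- the family v k = B^k a
  set v : ℕ → (Fin n → ℂ) := fun k => (B ^ k).mulVec a with hv
  have hv_eig : ∀ k : ℕ, A.mulVec (v k) = (ξ ^ k * ca) • v k := by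
    intro k
    induction k with
    | zero => simpa [hv] using ha
    | succ k ih =>
      have h1 : v (k + 1) = B.mulVec (v k) := by
        simp [hv, pow_succ', ← Matrix.mulVec_mulVec]
      rw [h1, Matrix.mulVec_mulVec, hcomm, Matrix.smul_mulVec, ← Matrix.mulVec_mulVec,
        ih, Matrix.mulVec_smul, smul_smul]
      congr 1
      rw [pow_succ]
      ring
  have hv_norm : ∀ k : ℕ, star (v k) ⬝ᵥ v k = 1 := by
    intro k
    induction k with
    | zero => simpa [hv] using hna'
    | succ k ih =>
      have h1 : v (k + 1) = B.mulVec (v k) := by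
        simp [hv, pow_succ', ← Matrix.mulVec_mulVec]
      rw [h1, key B hB', ih]
  -- orthogonality
  have hv_orth : ∀ k l : ℕ, k < n → l < n → k ≠ l → star (v k) ⬝ᵥ v l = 0 := by
    intro k l hkn hln hkl
    have h1 := key A hA' (v k) (v l)
    rw [hv_eig k, hv_eig l] at h1
    rw [star_smul, smul_dotProduct, dotProduct_smul] at h1
    have h2 : ((starRingEnd ℂ) (ξ ^ k * ca) * (ξ ^ l * ca) - 1) * (star (v k) ⬝ᵥ v l) = 0 := by
      rw [sub_mul, one_mul, sub_eq_zero]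
      simpa [smul_eq_mul, mul_assoc] using h1
    rcases mul_eq_zero.mp h2 with h3 | h3
    · exfalso
      have h3' := sub_eq_zero.mp h3
      rw [_root_.map_mul, _root_.map_pow] at h3'
      have h4 : (starRingEnd ℂ) ξ ^ k * ξ ^ l * ((starRingEnd ℂ) ca * ca) = 1 := by
        linear_combination h3'
      rw [hca, mul_one] at h4
      have h5 : (starRingEnd ℂ) ξ ^ k * ξ ^ k = 1 := by
        rw [← mul_pow, hξ1, one_pow]
      have hne : (starRingEnd ℂ) ξ ^ k ≠ 0 := by
        intro h; rw [h, zero_mul] at h5; exact one_ne_zero h5.symm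
      have h6 : (ξ : ℂ) ^ l = ξ ^ k := mul_left_cancel₀ hne (h4.trans h5.symm)
      exact hkl (hprim.pow_inj hkn hln h6.symm)
    · exact h3
  -- Bᴴ b = cb⁻¹ b and inner products with b
  have hBHb : Bᴴ.mulVec b = cb⁻¹ • b := by
    have h1 : Bᴴ.mulVec (B.mulVec b) = b := by
      rw [Matrix.mulVec_mulVec, hB', Matrix.one_mulVec]
    rw [hb, Matrix.mulVec_smul] at h1
    calc Bᴴ.mulVec b = cb⁻¹ • (cb • (Bᴴ.mulVec b)) := by
          rw [smul_smul, inv_mul_cancel₀ hcb0, one_smul]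
      _ = cb⁻¹ • b := by rw [h1]
  set s : ℂ := star a ⬝ᵥ b with hs
  have hvb : ∀ k : ℕ, star (v k) ⬝ᵥ b = (cb⁻¹) ^ k * s := by
    intro k
    have hBH : ∀ m : ℕ, (Bᴴ ^ m).mulVec b = (cb⁻¹) ^ m • b := by
      intro m
      induction m with
      | zero => simp
      | succ m ih =>
        rw [pow_succ, ← Matrix.mulVec_mulVec, hBHb, Matrix.mulVec_smul, ih, smul_smul,
          pow_succ']
    show star ((B ^ k) *ᵥ a) ⬝ᵥ b = (cb⁻¹) ^ k * s
    rw [Matrix.star_mulVec, ← Matrix.dotProduct_mulVec, Matrix.conjTranspose_pow,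
      hBH k, dotProduct_smul]
    simp [hs, smul_eq_mul]
  -- move to EuclideanSpace and build an orthonormal basis
  let E := EuclideanSpace ℂ (Fin n)
  let w : Fin n → E := fun k => (WithLp.equiv 2 (Fin n → ℂ)).symm (v k)
  have hON : Orthonormal ℂ w := by
    rw [orthonormal_iff_ite]
    intro k l
    simp only [w, WithLp.equiv_symm_apply]
    rw [EuclideanSpace.inner_toLp_toLp, dotProduct_comm]
    by_cases hkl : k = l
    · subst hkl; simp [hv_norm k]
    · simp [hkl, hv_orth k l k.isLt l.isLt (fun h => hkl (Fin.ext h))]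
  have hcard : Fintype.card (Fin n) = Module.finrank ℂ E := by
    simp [E, finrank_euclideanSpace_fin]
  haveI : Nonempty (Fin n) := ⟨⟨0, by omega⟩⟩
  have hsp : ⊤ ≤ Submodule.span ℂ (Set.range w) := by
    rw [hON.linearIndependent.span_eq_top_of_card_eq_finrank hcard]
  let ob : OrthonormalBasis (Fin n) ℂ E := OrthonormalBasis.mk hON hsp
  let b' : E := (WithLp.equiv 2 (Fin n → ℂ)).symm b
  have hpars := ob.sum_inner_mul_inner b' b'
  have hob : ∀ k, ob k = w k := fun k => by
    rw [show ob = OrthonormalBasis.mk hON hsp from rfl, OrthonormalBasis.coe_mk]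
  have hconj : (starRingEnd ℂ) cb⁻¹ * cb⁻¹ = 1 := by
    rw [map_inv₀, ← mul_inv, hcb, inv_one]
  have hterm : ∀ k : Fin n, (inner ℂ b' (ob k) * inner ℂ (ob k) b' : ℂ)
      = (starRingEnd ℂ) s * s := by
    intro k
    have hwb : (inner ℂ (w k) b' : ℂ) = (cb⁻¹) ^ (k : ℕ) * s := by
      rw [show (inner ℂ (w k) b' : ℂ) = star (v k) ⬝ᵥ b from by
        rw [EuclideanSpace.inner_eq_star_dotProduct, dotProduct_comm]; rfl]
      exact hvb k
    have hbw : (inner ℂ b' (w k) : ℂ) = (starRingEnd ℂ) ((cb⁻¹) ^ (k : ℕ) * s) :=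
      (inner_conj_symm b' (w k)).symm.trans (by rw [hwb])
    rw [hob k, hwb, hbw, _root_.map_mul, _root_.map_pow]
    calc (starRingEnd ℂ) cb⁻¹ ^ (k : ℕ) * (starRingEnd ℂ) s * (cb⁻¹ ^ (k : ℕ) * s)
        = ((starRingEnd ℂ) cb⁻¹ * cb⁻¹) ^ (k : ℕ) * ((starRingEnd ℂ) s * s) := by ring
      _ = (starRingEnd ℂ) s * s := by rw [hconj, one_pow, one_mul]
  have hbb : (inner ℂ b' b' : ℂ) = 1 := by
    rw [show (inner ℂ b' b' : ℂ) = star b ⬝ᵥ b from by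
      rw [EuclideanSpace.inner_eq_star_dotProduct, dotProduct_comm]; rfl]; exact hnb'
  rw [Finset.sum_congr rfl (fun k _ => hterm k), hbb, Finset.sum_const] at hpars
  simp only [Finset.card_univ, Fintype.card_fin, nsmul_eq_mul] at hpars
  -- conclude
  have hs_eq : (starRingEnd ℂ) s * s = ((‖s‖ ^ 2 : ℝ) : ℂ) := by
    rw [mul_comm, Complex.mul_conj]
    norm_cast
    exact (Complex.sq_norm s).symm
  rw [hs_eq] at hpars
  have hfin : (n : ℝ) * (‖s‖ ^ 2) = 1 := by
    exact_mod_cast hpars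
  have hsum : (∑ x, (starRingEnd ℂ) (a x) * b x) = s := by
    simp [hs, dotProduct, Pi.star_apply]
  rw [hsum, eq_div_iff (show (n : ℝ) ≠ 0 by exact_mod_cast hn0)]
  linarith [hfin]
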